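/- arXiv:2303.06646 — 2 statements merged into one kernel-verified Lean document; each statement's English description precedes it below -/
import Mathlib

section
/- Let (M, E) be an exact category and 𝒫 a pseudo-cluster tilting subcategory of M. Then every conflation of M which is either Hom(𝒫,−)-exact or Hom(−,𝒫)-exact belongs to the class 𝒯. -/
open CategoryTheory CategoryTheory.Limits

universe v u

namespace PaperQEC

section QuotientCategory

variable {C : Type u} [Category.{v} C] [Preadditive C]

/-- `f` factors through an object belonging to `P`. -/
def FactorsThru (P : Set C) {X Y : C} (f : X ⟶ Y) : Prop :=
  ∃ Z ∈ P, ∃ (g : X ⟶ Z) (h : Z ⟶ Y), g ≫ h = f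

/-- The subgroup of `Hom(X, Y)` generated by morphisms factoring through an object of `P`
(for `P` closed under finite sums this is just the set of such morphisms). -/
def factorIdeal (P : Set C) (X Y : C) : AddSubgroup (X ⟶ Y) :=
  AddSubgroup.closure {f | FactorsThru P f}

lemma factorIdeal_comp_left (P : Set C) {X Y Z : C} {f : X ⟶ Y}
    (hf : f ∈ factorIdeal P X Y) (g : Y ⟶ Z) : f ≫ g ∈ factorIdeal P X Z := by
  have h : factorIdeal P X Y ≤
      (factorIdeal P X Z).comap (AddMonoidHom.mk' (fun u : X ⟶ Y => u ≫ g)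
        (fun a b => Preadditive.add_comp _ _ _ _ _ _)) := by
    refine (AddSubgroup.closure_le _).mpr ?_
    rintro u ⟨Zp, hZp, a, b, rfl⟩
    exact AddSubgroup.mem_comap.mpr
      (AddSubgroup.subset_closure ⟨Zp, hZp, a, b ≫ g, (Category.assoc _ _ _).symm⟩)
  exact h hf

lemma factorIdeal_comp_right (P : Set C) {X Y Z : C} (f : X ⟶ Y) {g : Y ⟶ Z}
    (hg : g ∈ factorIdeal P Y Z) : f ≫ g ∈ factorIdeal P X Z := by
  have h : factorIdeal P Y Z ≤
      (factorIdeal P X Z).comap (AddMonoidHom.mk' (fun u : Y ⟶ Z => f ≫ u)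
        (fun a b => Preadditive.comp_add _ _ _ _ _ _)) := by
    refine (AddSubgroup.closure_le _).mpr ?_
    rintro u ⟨Zp, hZp, a, b, rfl⟩
    exact AddSubgroup.mem_comap.mpr
      (AddSubgroup.subset_closure ⟨Zp, hZp, f ≫ a, b, Category.assoc _ _ _⟩)
  exact h hg

/-- Objects of the quotient (stable) category `C / P`. -/
structure QuotObj (P : Set C) : Type u where
  obj : C

variable (P : Set C)

instance quotCategory : Category.{v} (QuotObj P) where
  Hom A B := (A.obj ⟶ B.obj) ⧸ factorIdeal P A.obj B.obj
  id A := QuotientAddGroup.mk (𝟙 A.obj)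
  comp {A B D} f g :=
    Quotient.liftOn₂ f g (fun a b => QuotientAddGroup.mk (a ≫ b)) (by
      intro a₁ b₁ a₂ b₂ ha hb
      have ha' : -a₁ + a₂ ∈ factorIdeal P A.obj B.obj := QuotientAddGroup.leftRel_apply.mp ha
      have hb' : -b₁ + b₂ ∈ factorIdeal P B.obj D.obj := QuotientAddGroup.leftRel_apply.mp hb
      refine (QuotientAddGroup.eq (s := factorIdeal P A.obj D.obj)).mpr ?_
      have h1 : (-a₁ + a₂) ≫ b₁ ∈ factorIdeal P A.obj D.obj :=
        factorIdeal_comp_left P ha' b₁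
      have h2 : a₂ ≫ (-b₁ + b₂) ∈ factorIdeal P A.obj D.obj :=
        factorIdeal_comp_right P a₂ hb'
      have h3 := AddSubgroup.add_mem _ h1 h2
      have heq : -(a₁ ≫ b₁) + a₂ ≫ b₂ = (-a₁ + a₂) ≫ b₁ + a₂ ≫ (-b₁ + b₂) := by
        simp only [Preadditive.add_comp, Preadditive.comp_add, Preadditive.neg_comp,
          Preadditive.comp_neg]
        abel
      rw [heq]; exact h3)
  id_comp {A B} f := by
    induction f using Quotient.inductionOn with
    | h a => exact congrArg QuotientAddGroup.mk (Category.id_comp a)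
  comp_id {A B} f := by
    induction f using Quotient.inductionOn with
    | h a => exact congrArg QuotientAddGroup.mk (Category.comp_id a)
  assoc {A B D E} f g h := by
    induction f using Quotient.inductionOn with
    | h a =>
    induction g using Quotient.inductionOn with
    | h b =>
    induction h using Quotient.inductionOn with
    | h c => exact congrArg QuotientAddGroup.mk (Category.assoc a b c)

/-- The image in the quotient category of a morphism of `C`. -/
def qmap {X Y : C} (f : X ⟶ Y) : (QuotObj.mk X : QuotObj P) ⟶ QuotObj.mk Y :=
  QuotientAddGroup.mk f

instance quotPreadditive : Preadditive (QuotObj P) where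
  homGroup A B :=
    inferInstanceAs (AddCommGroup ((A.obj ⟶ B.obj) ⧸ factorIdeal P A.obj B.obj))
  add_comp A B D f f' g := by
    induction f using Quotient.inductionOn with
    | h a =>
    induction f' using Quotient.inductionOn with
    | h a' =>
    induction g using Quotient.inductionOn with
    | h b =>
      show QuotientAddGroup.mk ((a + a') ≫ b) =
        QuotientAddGroup.mk (a ≫ b) + QuotientAddGroup.mk (a' ≫ b)
      rw [Preadditive.add_comp]
      rfl
  comp_add A B D f g g' := by
    induction f using Quotient.inductionOn with
    | h a =>
    induction g using Quotient.inductionOn with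
    | h b =>
    induction g' using Quotient.inductionOn with
    | h b' =>
      show QuotientAddGroup.mk (a ≫ (b + b')) =
        QuotientAddGroup.mk (a ≫ b) + QuotientAddGroup.mk (a ≫ b')
      rw [Preadditive.comp_add]
      rfl

end QuotientCategory

section Exact

variable {C : Type u} [Category.{v} C] [Preadditive C]

/-- `k` is a kernel of `f`. -/
def IsKernelOf {K X Y : C} (k : K ⟶ X) (f : X ⟶ Y) : Prop :=
  k ≫ f = 0 ∧ ∀ {T : C} (g : T ⟶ X), g ≫ f = 0 → ∃! t : T ⟶ K, t ≫ k = g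

/-- `c` is a cokernel of `f`. -/
def IsCokernelOf {X Y Q : C} (c : Y ⟶ Q) (f : X ⟶ Y) : Prop :=
  f ≫ c = 0 ∧ ∀ {T : C} (g : Y ⟶ T), f ≫ g = 0 → ∃! t : Q ⟶ T, c ≫ t = g

/-- A class of composable pairs of morphisms (the prospective conflations). -/
abbrev ConfClass (D : Type*) [Category D] :=
  ∀ ⦃X Y Z : D⦄, (X ⟶ Y) → (Y ⟶ Z) → Prop

/-- A Quillen exact structure on an additive category: a class of kernel–cokernel pairs
(conflations), closed under isomorphisms, containing the identities as inflations and
deflations, with inflations and deflations closed under composition, pushouts of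
inflations and pullbacks of deflations existing and being inflations resp. deflations. -/
structure ExactStructure (D : Type u) [Category.{v} D] [Preadditive D] where
  conf : ConfClass D
  ker_of_conf : ∀ {X Y Z : D} {i : X ⟶ Y} {d : Y ⟶ Z}, conf i d → IsKernelOf i d
  coker_of_conf : ∀ {X Y Z : D} {i : X ⟶ Y} {d : Y ⟶ Z}, conf i d → IsCokernelOf d i
  isoClosed : ∀ {X Y Z X' Y' Z' : D} {i : X ⟶ Y} {d : Y ⟶ Z} {i' : X' ⟶ Y'} {d' : Y' ⟶ Z'}
    (eX : X ≅ X') (eY : Y ≅ Y') (eZ : Z ≅ Z'),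
    i ≫ eY.hom = eX.hom ≫ i' → d ≫ eZ.hom = eY.hom ≫ d' → conf i d → conf i' d'
  id_isInflation : ∀ X : D, ∃ (Z : D) (d : X ⟶ Z), conf (𝟙 X) d
  id_isDeflation : ∀ X : D, ∃ (W : D) (i : W ⟶ X), conf i (𝟙 X)
  infl_comp : ∀ {X Y Z : D} (i : X ⟶ Y) (j : Y ⟶ Z),
    (∃ (W : D) (d : Y ⟶ W), conf i d) → (∃ (W : D) (d : Z ⟶ W), conf j d) →
    ∃ (W : D) (d : Z ⟶ W), conf (i ≫ j) d
  defl_comp : ∀ {X Y Z : D} (p : X ⟶ Y) (q : Y ⟶ Z),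
    (∃ (W : D) (i : W ⟶ X), conf i p) → (∃ (W : D) (i : W ⟶ Y), conf i q) →
    ∃ (W : D) (i : W ⟶ X), conf i (p ≫ q)
  infl_pushout : ∀ {X Y : D} (i : X ⟶ Y), (∃ (W : D) (d : Y ⟶ W), conf i d) →
    ∀ {A : D} (f : X ⟶ A), ∃ (B : D) (i' : A ⟶ B) (g : Y ⟶ B),
      (∃ (W : D) (d : B ⟶ W), conf i' d) ∧ IsPushout i f g i'
  defl_pullback : ∀ {Y Z : D} (p : Y ⟶ Z), (∃ (W : D) (i : W ⟶ Y), conf i p) →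
    ∀ {B : D} (f : B ⟶ Z), ∃ (A : D) (p' : A ⟶ B) (g : A ⟶ Y),
      (∃ (W : D) (i : W ⟶ A), conf i p') ∧ IsPullback g p' p f

/-- `i` is an inflation, i.e. the first map of some conflation. -/
def IsInflation (E : ConfClass C) {X Y : C} (i : X ⟶ Y) : Prop :=
  ∃ (Z : C) (d : Y ⟶ Z), E i d

/-- `d` is a deflation, i.e. the second map of some conflation. -/
def IsDeflation (E : ConfClass C) {Y Z : C} (d : Y ⟶ Z) : Prop :=
  ∃ (X : C) (i : X ⟶ Y), E i d

/-- `P` is a full additive subcategory: nonempty, closed under isomorphisms,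
finite sums and summands. -/
structure IsAddSubcat [HasBinaryBiproducts C] (P : Set C) : Prop where
  nonempty : P.Nonempty
  isoClosed : ∀ {X Y : C}, (X ≅ Y) → X ∈ P → Y ∈ P
  sumClosed : ∀ {X Y : C}, X ∈ P → Y ∈ P → (X ⊞ Y) ∈ P
  summandClosed : ∀ {X Y : C} (s : X ⟶ Y) (r : Y ⟶ X), s ≫ r = 𝟙 X → Y ∈ P → X ∈ P

/-- `f : Q ⟶ X` is a `P`-precover of `X`. -/
def IsPrecover (P : Set C) {Q X : C} (f : Q ⟶ X) : Prop :=
  Q ∈ P ∧ ∀ (Q' : C), Q' ∈ P → ∀ g : Q' ⟶ X, ∃ h : Q' ⟶ Q, h ≫ f = g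

/-- `f : X ⟶ Q` is a `P`-preenvelope of `X`. -/
def IsPreenvelope (P : Set C) {X Q : C} (f : X ⟶ Q) : Prop :=
  Q ∈ P ∧ ∀ (Q' : C), Q' ∈ P → ∀ g : X ⟶ Q', ∃ h : Q ⟶ Q', f ≫ h = g

/-- `P` is strongly contravariantly finite: every object has a `P`-precover
which is a deflation. -/
def StronglyContraFinite (E : ConfClass C) (P : Set C) : Prop :=
  ∀ X : C, ∃ (Q : C) (f : Q ⟶ X), IsPrecover P f ∧ IsDeflation E f

/-- `P` is strongly covariantly finite: every object has a `P`-preenvelope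
which is an inflation. -/
def StronglyCovFinite (E : ConfClass C) (P : Set C) : Prop :=
  ∀ X : C, ∃ (Q : C) (f : X ⟶ Q), IsPreenvelope P f ∧ IsInflation E f

/-- The pair `(i, d)` is `Hom(P,-)`-exact: for every `Q ∈ P`, the sequence
`0 → Hom(Q,X) → Hom(Q,Y) → Hom(Q,Z) → 0` is exact. -/
def HomCovExact (P : Set C) {X Y Z : C} (i : X ⟶ Y) (d : Y ⟶ Z) : Prop :=
  ∀ Q : C, Q ∈ P →
    (∀ g : Q ⟶ X, g ≫ i = 0 → g = 0) ∧
    (∀ u : Q ⟶ Y, u ≫ d = 0 → ∃ g : Q ⟶ X, g ≫ i = u) ∧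
    (∀ h : Q ⟶ Z, ∃ u : Q ⟶ Y, u ≫ d = h)

/-- The pair `(i, d)` is `Hom(-,P)`-exact: for every `Q ∈ P`, the sequence
`0 → Hom(Z,Q) → Hom(Y,Q) → Hom(X,Q) → 0` is exact. -/
def HomContraExact (P : Set C) {X Y Z : C} (i : X ⟶ Y) (d : Y ⟶ Z) : Prop :=
  ∀ Q : C, Q ∈ P →
    (∀ g : Z ⟶ Q, d ≫ g = 0 → g = 0) ∧
    (∀ u : Y ⟶ Q, i ≫ u = 0 → ∃ g : Z ⟶ Q, d ≫ g = u) ∧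
    (∀ h : X ⟶ Q, ∃ u : Y ⟶ Q, i ≫ u = h)

/-- Condition (▲): `P` is strongly covariantly finite and every `X` admits a conflation
`0 → X → Q₀ → Q₁ → 0` with `Q₀, Q₁ ∈ P` whose inflation is a `P`-preenvelope. -/
def CondEnv (E : ConfClass C) (P : Set C) : Prop :=
  StronglyCovFinite E P ∧
  ∀ X : C, ∃ (Q₀ Q₁ : C) (α : X ⟶ Q₀) (q : Q₀ ⟶ Q₁),
    E α q ∧ Q₀ ∈ P ∧ Q₁ ∈ P ∧ IsPreenvelope P α

/-- Condition (▼): `P` is strongly contravariantly finite and every `X` admits a conflation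
`0 → P₁ → P₀ → X → 0` with `P₀, P₁ ∈ P` whose deflation is a `P`-precover. -/
def CondCov (E : ConfClass C) (P : Set C) : Prop :=
  StronglyContraFinite E P ∧
  ∀ X : C, ∃ (P₀ P₁ : C) (i : P₁ ⟶ P₀) (β : P₀ ⟶ X),
    E i β ∧ P₀ ∈ P ∧ P₁ ∈ P ∧ IsPrecover P β

/-- `P` is a pseudo-cluster tilting subcategory. -/
def PseudoClusterTilting (E : ConfClass C) (P : Set C) : Prop :=
  CondEnv E P ∧ CondCov E P

/-- The conflation `(i, d)` splits. -/
def Splits {X Y Z : C} (i : X ⟶ Y) (d : Y ⟶ Z) : Prop :=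
  (∃ r : Y ⟶ X, i ≫ r = 𝟙 X) ∧ ∃ s : Z ⟶ Y, s ≫ d = 𝟙 Z

/-- `P` is self-orthogonal with respect to the class `cl` of conflations: every
conflation in `cl` with both end terms in `P` splits. -/
def SelfOrthWrt (P : Set C) (cl : ConfClass C) : Prop :=
  ∀ ⦃X Y Z : C⦄ (i : X ⟶ Y) (d : Y ⟶ Z), cl i d → X ∈ P → Z ∈ P → Splits i d

/-- `P` is a cluster tilting subcategory: a pseudo-cluster tilting subcategory which is
self-orthogonal with respect to all conflations. -/
def ClusterTilting (E : ConfClass C) (P : Set C) : Prop :=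
  PseudoClusterTilting E P ∧ SelfOrthWrt P E

/-- The class `𝒮` of conflations. -/
def memS (E : ConfClass C) (P : Set C) ⦃S₁ S₂ S₃ : C⦄ (i : S₁ ⟶ S₂) (d : S₂ ⟶ S₃) : Prop :=
  E i d ∧ ∃ (U M₁ M₂ : C) (u₁ : U ⟶ S₁) (p₁ : S₁ ⟶ M₁) (u₂ : U ⟶ S₂) (p₂ : S₂ ⟶ M₂)
    (m : M₁ ⟶ M₂) (q : M₂ ⟶ S₃),
    E u₁ p₁ ∧ E u₂ p₂ ∧ E m q ∧
    HomCovExact P u₂ p₂ ∧ HomContraExact P m q ∧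
    u₁ ≫ i = u₂ ∧ i ≫ p₂ = p₁ ≫ m ∧ d = p₂ ≫ q

/-- The class `𝒯` of conflations. -/
def memT (E : ConfClass C) (P : Set C) ⦃T₁ T₂ T₃ : C⦄ (i : T₁ ⟶ T₂) (d : T₂ ⟶ T₃) : Prop :=
  E i d ∧ ∃ (V N₂ N₃ : C) (n₁ : T₁ ⟶ N₂) (n₂ : N₂ ⟶ N₃) (j₂ : N₂ ⟶ T₂) (v₂ : T₂ ⟶ V)
    (j₃ : N₃ ⟶ T₃) (v₃ : T₃ ⟶ V),
    E n₁ n₂ ∧ E j₂ v₂ ∧ E j₃ v₃ ∧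
    HomCovExact P n₁ n₂ ∧ HomContraExact P j₂ v₂ ∧
    i = n₁ ≫ j₂ ∧ n₂ ≫ j₃ = j₂ ≫ d ∧ d ≫ v₃ = v₂

end Exact

section AbelianDefs

/-- A preadditive category is abelian (in the sense of Definition 2.1 of the paper) if it
has kernels and cokernels and the canonical morphism from the coimage to the image of any
morphism is an isomorphism. -/
def IsAbelianCat (D : Type*) [Category D] [Preadditive D] : Prop :=
  ∃ (hk : HasKernels D) (hc : HasCokernels D),
    ∀ {X Y : D} (f : X ⟶ Y),
      haveI := hk; haveI := hc
      IsIso (CategoryTheory.Abelian.coimageImageComparison f)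

/-- A preadditive category is semi-abelian if it has kernels and cokernels and the
canonical morphism from the coimage to the image of any morphism is both an epimorphism
and a monomorphism. -/
def IsSemiAbelianCat (D : Type*) [Category D] [Preadditive D] : Prop :=
  ∃ (hk : HasKernels D) (hc : HasCokernels D),
    ∀ {X Y : D} (f : X ⟶ Y),
      haveI := hk; haveI := hc
      Mono (CategoryTheory.Abelian.coimageImageComparison f) ∧
      Epi (CategoryTheory.Abelian.coimageImageComparison f)

end AbelianDefs

section ConflationCategory

variable {M : Type u} [Category.{v} M] [Preadditive M]

/-- Objects of the category `E(M)` of conflations: conflations `0 → X₁ → X₂ → X₃ → 0`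
of the exact category `(M, E)`. -/
structure ConfObj (E : ExactStructure M) : Type max u v where
  X₁ : M
  X₂ : M
  X₃ : M
  i : X₁ ⟶ X₂
  d : X₂ ⟶ X₃
  conf : E.conf i d

variable {E : ExactStructure M}

/-- The additive group of morphisms of conflations: triples of morphisms making the two
squares commute. -/
def confHomGroup (A B : ConfObj E) :
    AddSubgroup ((A.X₁ ⟶ B.X₁) × (A.X₂ ⟶ B.X₂) × (A.X₃ ⟶ B.X₃)) where
  carrier := {t | A.i ≫ t.2.1 = t.1 ≫ B.i ∧ A.d ≫ t.2.2 = t.2.1 ≫ B.d}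
  zero_mem' := by simp
  add_mem' := by
    rintro a b ⟨ha₁, ha₂⟩ ⟨hb₁, hb₂⟩
    refine ⟨?_, ?_⟩ <;>
      simp [Preadditive.comp_add, Preadditive.add_comp, ha₁, ha₂, hb₁, hb₂]
  neg_mem' := by
    rintro a ⟨h₁, h₂⟩
    refine ⟨?_, ?_⟩ <;> simp [h₁, h₂]

instance confCategoryStruct : CategoryStruct.{v} (ConfObj E) where
  Hom A B := ↥(confHomGroup A B)
  id A := ⟨(𝟙 _, 𝟙 _, 𝟙 _), by constructor <;> simp⟩
  comp {A B D} f g := ⟨(f.1.1 ≫ g.1.1, f.1.2.1 ≫ g.1.2.1, f.1.2.2 ≫ g.1.2.2), by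
    obtain ⟨hf₁, hf₂⟩ := f.2
    obtain ⟨hg₁, hg₂⟩ := g.2
    constructor
    · rw [← Category.assoc, hf₁, Category.assoc, hg₁, ← Category.assoc]
    · rw [← Category.assoc, hf₂, Category.assoc, hg₂, ← Category.assoc]⟩

/-- Degree `-1` component of a morphism of conflations. -/
def homC₁ {A B : ConfObj E} (f : A ⟶ B) : A.X₁ ⟶ B.X₁ := f.1.1

/-- Degree `0` component of a morphism of conflations. -/
def homC₂ {A B : ConfObj E} (f : A ⟶ B) : A.X₂ ⟶ B.X₂ := f.1.2.1

/-- Degree `1` component of a morphism of conflations. -/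
def homC₃ {A B : ConfObj E} (f : A ⟶ B) : A.X₃ ⟶ B.X₃ := f.1.2.2

lemma confHom_ext {A B : ConfObj E} {f g : A ⟶ B} (h₁ : homC₁ f = homC₁ g)
    (h₂ : homC₂ f = homC₂ g) (h₃ : homC₃ f = homC₃ g) : f = g := by
  apply Subtype.ext
  show (homC₁ f, homC₂ f, homC₃ f) = (homC₁ g, homC₂ g, homC₃ g)
  rw [h₁, h₂, h₃]

@[simp] lemma homC₁_id (A : ConfObj E) : homC₁ (𝟙 A) = 𝟙 A.X₁ := rfl
@[simp] lemma homC₂_id (A : ConfObj E) : homC₂ (𝟙 A) = 𝟙 A.X₂ := rfl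
@[simp] lemma homC₃_id (A : ConfObj E) : homC₃ (𝟙 A) = 𝟙 A.X₃ := rfl
@[simp] lemma homC₁_comp {A B D : ConfObj E} (f : A ⟶ B) (g : B ⟶ D) :
    homC₁ (f ≫ g) = homC₁ f ≫ homC₁ g := rfl
@[simp] lemma homC₂_comp {A B D : ConfObj E} (f : A ⟶ B) (g : B ⟶ D) :
    homC₂ (f ≫ g) = homC₂ f ≫ homC₂ g := rfl
@[simp] lemma homC₃_comp {A B D : ConfObj E} (f : A ⟶ B) (g : B ⟶ D) :
    homC₃ (f ≫ g) = homC₃ f ≫ homC₃ g := rfl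

instance confCategory : Category.{v} (ConfObj E) where
  id_comp f := confHom_ext (by simp) (by simp) (by simp)
  comp_id f := confHom_ext (by simp) (by simp) (by simp)
  assoc f g h := confHom_ext (by simp) (by simp) (by simp)

instance confHomAddCommGroup (A B : ConfObj E) : AddCommGroup (A ⟶ B) :=
  inferInstanceAs (AddCommGroup ↥(confHomGroup A B))

@[simp] lemma homC₁_add {A B : ConfObj E} (f g : A ⟶ B) :
    homC₁ (f + g) = homC₁ f + homC₁ g := rfl
@[simp] lemma homC₂_add {A B : ConfObj E} (f g : A ⟶ B) :
    homC₂ (f + g) = homC₂ f + homC₂ g := rfl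
@[simp] lemma homC₃_add {A B : ConfObj E} (f g : A ⟶ B) :
    homC₃ (f + g) = homC₃ f + homC₃ g := rfl

instance confPreadditive : Preadditive (ConfObj E) where
  homGroup A B := inferInstance
  add_comp A B D f f' g :=
    confHom_ext (by simp [Preadditive.add_comp]) (by simp [Preadditive.add_comp])
      (by simp [Preadditive.add_comp])
  comp_add A B D f g g' :=
    confHom_ext (by simp [Preadditive.comp_add]) (by simp [Preadditive.comp_add])
      (by simp [Preadditive.comp_add])

/-- The degree-wise class of conflations on `E(M)`: a short sequence of conflations is a
conflation if it is a conflation of `M` in each degree. -/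
def degConf (E : ExactStructure M) : ConfClass (ConfObj E) := fun _ _ _ f g =>
  E.conf (homC₁ f) (homC₁ g) ∧ E.conf (homC₂ f) (homC₂ g) ∧ E.conf (homC₃ f) (homC₃ g)

/-- The class `E₀`: degree-wise conflations splitting in degree `0`. -/
def degConf₀ (E : ExactStructure M) : ConfClass (ConfObj E) := fun _ _ _ f g =>
  degConf E f g ∧ Splits (homC₂ f) (homC₂ g)

/-- The class `E₀⁻¹`: degree-wise conflations splitting in degrees `-1` and `0`. -/
def degConf₀neg (E : ExactStructure M) : ConfClass (ConfObj E) := fun _ _ _ f g =>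
  degConf E f g ∧ Splits (homC₁ f) (homC₁ g) ∧ Splits (homC₂ f) (homC₂ g)

/-- The class `E₀¹`: degree-wise conflations splitting in degrees `0` and `1`. -/
def degConf₀pos (E : ExactStructure M) : ConfClass (ConfObj E) := fun _ _ _ f g =>
  degConf E f g ∧ Splits (homC₂ f) (homC₂ g) ∧ Splits (homC₃ f) (homC₃ g)

/-- The full subcategory `S(M)` of `E(M)` consisting of the split conflations. -/
def splitObjs (E : ExactStructure M) : Set (ConfObj E) :=
  {A | Splits A.i A.d}

end ConflationCategory


section Aux

variable {M : Type u} [Category.{v} M] [Preadditive M]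

/-- If `(𝟙 X, v)` is a conflation then `v = 0` and the codomain of `v` is a zero object. -/
lemma id_infl_aux (E : ExactStructure M) {X V : M} {v : X ⟶ V} (h : E.conf (𝟙 X) v) :
    v = 0 ∧ 𝟙 V = (0 : V ⟶ V) := by
  obtain ⟨hz, huniv⟩ := E.coker_of_conf h
  have hv : v = 0 := by simpa using hz
  obtain ⟨t, _, hunique⟩ := huniv (0 : X ⟶ V) (by simp)
  have h1 := hunique (𝟙 V) (by simp [hv])
  have h0 := hunique 0 (by simp)
  exact ⟨hv, h1.trans h0.symm⟩

/-- If `(i, 𝟙 Z)` is a conflation then `i = 0` and the domain of `i` is a zero object. -/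
lemma id_defl_aux (E : ExactStructure M) {W Z : M} {i : W ⟶ Z} (h : E.conf i (𝟙 Z)) :
    i = 0 ∧ 𝟙 W = (0 : W ⟶ W) := by
  obtain ⟨hz, huniv⟩ := E.ker_of_conf h
  have hi : i = 0 := by simpa using hz
  obtain ⟨t, _, hunique⟩ := huniv (0 : W ⟶ Z) (by simp)
  have h1 := hunique (𝟙 W) (by simp [hi])
  have h0 := hunique 0 (by simp)
  exact ⟨hi, h1.trans h0.symm⟩

/-- An isomorphism between two zero objects. -/
def zeroIso {V V' : M} (hV : 𝟙 V = (0 : V ⟶ V)) (hV' : 𝟙 V' = (0 : V' ⟶ V')) : V ≅ V' where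
  hom := 0
  inv := 0
  hom_inv_id := by rw [hV]; simp
  inv_hom_id := by rw [hV']; simp

end Aux

/-- every conflation which is `Hom(𝒫,-)`-exact or `Hom(-,𝒫)`-exact
belongs to the class `𝒯`. -/
theorem homExact_mem_T {M : Type u} [Category.{v} M] [Preadditive M]
    [HasBinaryBiproducts M] (E : ExactStructure M) (P : Set M) (hP : IsAddSubcat P)
    (h : PseudoClusterTilting E.conf P) {X Y Z : M} (i : X ⟶ Y) (d : Y ⟶ Z)
    (hconf : E.conf i d) (hexact : HomCovExact P i d ∨ HomContraExact P i d) :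
    memT E.conf P i d := by
  refine ⟨hconf, ?_⟩
  rcases hexact with hcov | hcontra
  · -- Hom(P,-)-exact case: N₂ = Y, N₃ = Z, V = cokernel of 𝟙 Y (a zero object)
    obtain ⟨V, v₂, hv₂⟩ := E.id_isInflation Y
    obtain ⟨hv₂0, hVzero⟩ := id_infl_aux E hv₂
    obtain ⟨V', v', hv'⟩ := E.id_isInflation Z
    obtain ⟨hv'0, hV'zero⟩ := id_infl_aux E hv'
    have hconf3 : E.conf (𝟙 Z) (0 : Z ⟶ V) := by
      refine E.isoClosed (Iso.refl Z) (Iso.refl Z) (zeroIso hV'zero hVzero) (by simp)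
        (by simp [hv'0]) hv'
    refine ⟨V, Y, Z, i, d, 𝟙 Y, v₂, 𝟙 Z, 0, hconf, hv₂, hconf3, hcov, ?_, by simp, by simp,
      by simp [hv₂0]⟩
    intro Q hQ
    refine ⟨fun g hg => ?_, fun u hu => ⟨0, by simpa [hv₂0] using hu.symm⟩,
      fun h => ⟨h, by simp⟩⟩
    calc g = 𝟙 V ≫ g := by simp
    _ = 0 := by rw [hVzero]; simp
  · -- Hom(-,P)-exact case: N₂ = X, N₃ = kernel of 𝟙 Z (a zero object), V = Z
    obtain ⟨W, n₂, hn₂⟩ := E.id_isInflation X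
    obtain ⟨hn₂0, hWzero⟩ := id_infl_aux E hn₂
    obtain ⟨W', i', hi'⟩ := E.id_isDeflation Z
    obtain ⟨hi'0, hW'zero⟩ := id_defl_aux E hi'
    have hconf3 : E.conf (0 : W ⟶ Z) (𝟙 Z) := by
      refine E.isoClosed (zeroIso hW'zero hWzero) (Iso.refl Z) (Iso.refl Z)
        (by simp [hi'0]) (by simp) hi'
    have hid0 : i ≫ d = 0 := (E.ker_of_conf hconf).1
    refine ⟨Z, X, W, 𝟙 X, n₂, i, d, 0, 𝟙 Z, hn₂, hconf, hconf3, ?_, hcontra,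
      by simp, by simp [hid0], by simp⟩
    intro Q hQ
    refine ⟨fun g hg => by simpa using hg, fun u _ => ⟨u, by simp⟩, fun h => ⟨0, ?_⟩⟩
    calc (0 : Q ⟶ X) ≫ n₂ = 0 := by simp
    _ = h ≫ 𝟙 W := by rw [hWzero]; simp
    _ = h := by simp

end PaperQEC
end

section
/- Let (M, E) be an exact category. Then the full subcategory S(M) of split conflations is a pseudo-cluster tilting subcategory of the exact category (E(M), E) of conflations with the degree-wise exact structure: S(M) is strongly functorially finite in (E(M), E), and every object X• of E(M) admits a conflation 0 → P1• → P0• → X• → 0 with P0•, P1• ∈ S(M) whose deflation is an S(M)-precover, and a conflation 0 → X• → Q0• → Q1• → 0 with Q0•, Q1• ∈ S(M) whose inflation is an S(M)-preenvelope. -/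
open CategoryTheory CategoryTheory.Limits

universe v u

namespace PaperQEC

section Aux

variable {M : Type u} [Category.{v} M] [Preadditive M] [HasBinaryBiproducts M]

/-- An isomorphism `𝟙 + u` when `u` is square-zero. -/
def unipIso {Y : M} (u : Y ⟶ Y) (h : u ≫ u = 0) : Y ≅ Y where
  hom := 𝟙 Y + u
  inv := 𝟙 Y - u
  hom_inv_id := by
    simp only [Preadditive.add_comp, Preadditive.comp_sub, Category.id_comp,
      Category.comp_id, h]
    abel
  inv_hom_id := by
    simp only [Preadditive.sub_comp, Preadditive.comp_add, Category.id_comp,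
      Category.comp_id, h]
    abel

/-- The isomorphism `-𝟙`. -/
def negIso (Y : M) : Y ≅ Y where
  hom := -𝟙 Y
  inv := -𝟙 Y
  hom_inv_id := by simp
  inv_hom_id := by simp

/-- Split biproduct sequences are conflations. -/
lemma conf_inl_snd (E : ExactStructure M) (X Y : M) :
    E.conf (biprod.inl : X ⟶ X ⊞ Y) (biprod.snd : X ⊞ Y ⟶ Y) := by
  obtain ⟨W, k, hk⟩ := E.id_isDeflation Y
  have hk0 : k = 0 := by simpa using (E.ker_of_conf hk).1
  rw [hk0] at hk
  obtain ⟨B, i', g, hinfl, hpo⟩ :=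
    E.infl_pushout (0 : W ⟶ Y) ⟨Y, 𝟙 Y, hk⟩ (0 : W ⟶ X)
  obtain ⟨Z', d', hconf⟩ := hinfl
  have hcomm : (0 : W ⟶ Y) ≫ (biprod.inr : Y ⟶ X ⊞ Y) =
      (0 : W ⟶ X) ≫ biprod.inl := by simp
  set eh : B ⟶ X ⊞ Y := hpo.desc biprod.inr biprod.inl hcomm with heh
  set ei : X ⊞ Y ⟶ B := biprod.desc i' g with hei
  have h1 : ei ≫ eh = 𝟙 _ := by
    apply biprod.hom_ext'
    · rw [← Category.assoc]; simp [hei, heh]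
    · rw [← Category.assoc]; simp [hei, heh]
  have h2 : eh ≫ ei = 𝟙 _ := by
    apply hpo.hom_ext
    · rw [← Category.assoc, hpo.inl_desc]; simp [hei]
    · rw [← Category.assoc, hpo.inr_desc]; simp [hei]
  have hconf2 : E.conf (biprod.inl : X ⟶ X ⊞ Y) (ei ≫ d') := by
    refine E.isoClosed (Iso.refl X) ⟨eh, ei, h2, h1⟩ (Iso.refl Z') ?_ ?_ hconf
    · show i' ≫ eh = 𝟙 X ≫ biprod.inl
      rw [Category.id_comp, heh, hpo.inr_desc]
    · show d' ≫ 𝟙 _ = eh ≫ ei ≫ d'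
      rw [← Category.assoc, h2, Category.id_comp, Category.comp_id]
  set d'' : X ⊞ Y ⟶ Z' := ei ≫ d'
  have hcok := E.coker_of_conf hconf2
  have hid0 : (biprod.inl : X ⟶ X ⊞ Y) ≫ d'' = 0 := hcok.1
  obtain ⟨t, ht, _⟩ := hcok.2 (biprod.snd : X ⊞ Y ⟶ Y) (by simp)
  have hsplit : biprod.snd ≫ biprod.inr ≫ d'' = d'' := by
    calc biprod.snd ≫ biprod.inr ≫ d''
        = (biprod.fst ≫ biprod.inl + biprod.snd ≫ biprod.inr) ≫ d'' := by
          rw [Preadditive.add_comp, Category.assoc, Category.assoc, hid0,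
            comp_zero, zero_add]
      _ = d'' := by rw [biprod.total, Category.id_comp]
  have ht't : (biprod.inr ≫ d'') ≫ t = 𝟙 Y := by
    rw [Category.assoc, ht, biprod.inr_snd]
  have htt' : t ≫ biprod.inr ≫ d'' = 𝟙 Z' := by
    obtain ⟨u, hu, huu⟩ := hcok.2 d'' hid0
    have e1 : d'' ≫ t ≫ biprod.inr ≫ d'' = d'' := by
      rw [← Category.assoc, ht, hsplit]
    rw [huu _ e1, huu (𝟙 Z') (by simp)]
  refine E.isoClosed (Iso.refl X) (Iso.refl _) ⟨t, biprod.inr ≫ d'', htt', ht't⟩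
    (by simp) ?_ hconf2
  show d'' ≫ t = 𝟙 _ ≫ biprod.snd
  rw [ht, Category.id_comp]

/-- `(lift (-1) i, desc i 1)` is a conflation. -/
lemma conf_lift_neg (E : ExactStructure M) {X₁ X₂ : M} (i : X₁ ⟶ X₂) :
    E.conf (biprod.lift (-𝟙 X₁) i) (biprod.desc i (𝟙 X₂)) := by
  let u : X₁ ⊞ X₂ ⟶ X₁ ⊞ X₂ := -(biprod.fst ≫ i ≫ biprod.inr)
  have hu : u ≫ u = 0 := by simp [u, Category.assoc]
  refine E.isoClosed (negIso X₁) (unipIso u hu) (Iso.refl X₂) ?_ ?_ (conf_inl_snd E X₁ X₂)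
  · show biprod.inl ≫ (𝟙 _ + u) = (-𝟙 X₁) ≫ biprod.lift (-𝟙 X₁) i
    apply biprod.hom_ext <;>
      simp [u, Preadditive.comp_add, Preadditive.add_comp, Preadditive.neg_comp,
        Preadditive.comp_neg]
  · show biprod.snd ≫ 𝟙 _ = (𝟙 _ + u) ≫ biprod.desc i (𝟙 X₂)
    apply biprod.hom_ext' <;>
      simp [u, Preadditive.comp_add, Preadditive.add_comp, Preadditive.neg_comp,
        Preadditive.comp_neg]

/-- `(lift 1 d, desc d (-1))` is a conflation. -/
lemma conf_lift_d (E : ExactStructure M) {X₂ X₃ : M} (d : X₂ ⟶ X₃) :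
    E.conf (biprod.lift (𝟙 X₂) d) (biprod.desc d (-𝟙 X₃)) := by
  let u : X₂ ⊞ X₃ ⟶ X₂ ⊞ X₃ := biprod.fst ≫ d ≫ biprod.inr
  have hu : u ≫ u = 0 := by simp [u, Category.assoc]
  refine E.isoClosed (Iso.refl X₂) (unipIso u hu) (negIso X₃) ?_ ?_ (conf_inl_snd E X₂ X₃)
  · show biprod.inl ≫ (𝟙 _ + u) = 𝟙 X₂ ≫ biprod.lift (𝟙 X₂) d
    apply biprod.hom_ext <;>
      simp [u, Preadditive.comp_add, Preadditive.add_comp]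
  · show biprod.snd ≫ (-𝟙 X₃) = (𝟙 _ + u) ≫ biprod.desc d (-𝟙 X₃)
    apply biprod.hom_ext' <;>
      simp [u, Preadditive.comp_add, Preadditive.add_comp, Preadditive.neg_comp,
        Preadditive.comp_neg]

/-- The precover half of the statement. -/
lemma cov_part (E : ExactStructure M) (A : ConfObj E) :
    ∃ (P₀ P₁ : ConfObj E) (ι : P₁ ⟶ P₀) (β : P₀ ⟶ A),
      degConf E ι β ∧ P₀ ∈ splitObjs E ∧ P₁ ∈ splitObjs E ∧
        IsPrecover (splitObjs E) β := by
  obtain ⟨W, k, hk⟩ := E.id_isDeflation A.X₁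
  have hk0 : k = 0 := by simpa using (E.ker_of_conf hk).1
  have hid : A.i ≫ A.d = 0 := (E.ker_of_conf A.conf).1
  have hW : (𝟙 W : W ⟶ W) = 0 := by
    obtain ⟨t, ht, htu⟩ := (E.ker_of_conf hk).2 (0 : W ⟶ A.X₁) (by simp)
    rw [htu (𝟙 W) (by simp [hk0]), htu 0 (by simp)]
  refine ⟨⟨A.X₁, A.X₁ ⊞ A.X₂, A.X₂, biprod.inl, biprod.snd, conf_inl_snd E _ _⟩,
    ⟨W, A.X₁, A.X₁, k, 𝟙 _, hk⟩,
    ⟨(k, biprod.lift (-𝟙 _) A.i, A.i), ?_, ?_⟩,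
    ⟨(𝟙 _, biprod.desc A.i (𝟙 _), A.d), ?_, ?_⟩, ?_, ?_, ?_, ?_⟩
  · show k ≫ biprod.lift (-𝟙 _) A.i = k ≫ biprod.inl
    rw [hk0]; simp
  · show (𝟙 _) ≫ A.i = biprod.lift (-𝟙 _) A.i ≫ biprod.snd
    simp
  · show biprod.inl ≫ biprod.desc A.i (𝟙 _) = (𝟙 _) ≫ A.i
    simp
  · show biprod.snd ≫ A.d = biprod.desc A.i (𝟙 _) ≫ A.d
    apply biprod.hom_ext' <;> simp [← Category.assoc, hid]
  · exact ⟨hk, conf_lift_neg E A.i, A.conf⟩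
  · exact ⟨⟨biprod.fst, biprod.inl_fst⟩, ⟨biprod.inr, biprod.inr_snd⟩⟩
  · exact ⟨⟨0, by simp [hW]⟩, ⟨𝟙 _, by simp⟩⟩
  · refine ⟨⟨⟨biprod.fst, biprod.inl_fst⟩, ⟨biprod.inr, biprod.inr_snd⟩⟩, ?_⟩
    intro Q' hQ' g
    obtain ⟨⟨r, hr⟩, ⟨s, hs⟩⟩ := hQ'
    obtain ⟨⟨g₁, g₂, g₃⟩, hg1, hg2⟩ := g
    dsimp only at hg1 hg2
    set b : Q'.X₂ ⟶ A.X₂ := g₂ - r ≫ g₁ ≫ A.i with hb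
    have hjb : Q'.i ≫ b = 0 := by
      rw [hb, Preadditive.comp_sub, hg1, ← Category.assoc, hr, Category.id_comp,
        sub_self]
    have hesb : Q'.d ≫ s ≫ b = b := by
      obtain ⟨t, ht, _⟩ := (E.ker_of_conf Q'.conf).2 (𝟙 Q'.X₂ - Q'.d ≫ s)
        (by rw [Preadditive.sub_comp, Category.id_comp, Category.assoc, hs,
          Category.comp_id, sub_self])
      have h1 : (𝟙 Q'.X₂ - Q'.d ≫ s) ≫ b = 0 := by
        rw [← ht, Category.assoc, hjb, comp_zero]
      rw [Preadditive.sub_comp, Category.id_comp, Category.assoc] at h1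
      linear_combination (norm := abel) -h1
    have hbd : b ≫ A.d = Q'.d ≫ g₃ := by
      simp only [hb, Preadditive.sub_comp, Category.assoc, hid, comp_zero,
        sub_zero]
      exact hg2.symm
    refine ⟨⟨(g₁, biprod.lift (r ≫ g₁) b, s ≫ b), ?_, ?_⟩, ?_⟩
    · show Q'.i ≫ biprod.lift (r ≫ g₁) b = g₁ ≫ biprod.inl
      apply biprod.hom_ext
      · rw [Category.assoc, biprod.lift_fst, ← Category.assoc, hr,
          Category.id_comp, Category.assoc, biprod.inl_fst, Category.comp_id]
      · rw [Category.assoc, biprod.lift_snd, hjb, Category.assoc,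
          biprod.inl_snd, comp_zero]
    · show Q'.d ≫ (s ≫ b) = biprod.lift (r ≫ g₁) b ≫ biprod.snd
      rw [biprod.lift_snd, hesb]
    · apply confHom_ext
      · show g₁ ≫ 𝟙 _ = g₁
        simp
      · show biprod.lift (r ≫ g₁) b ≫ biprod.desc A.i (𝟙 _) = g₂
        rw [biprod.lift_desc, Category.comp_id, hb, Category.assoc]
        abel
      · show (s ≫ b) ≫ A.d = g₃
        rw [Category.assoc, hbd, ← Category.assoc, hs, Category.id_comp]

/-- The preenvelope half of the statement. -/
lemma env_part (E : ExactStructure M) (A : ConfObj E) :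
    ∃ (Q₀ Q₁ : ConfObj E) (α : A ⟶ Q₀) (q : Q₀ ⟶ Q₁),
      degConf E α q ∧ Q₀ ∈ splitObjs E ∧ Q₁ ∈ splitObjs E ∧
        IsPreenvelope (splitObjs E) α := by
  obtain ⟨Z, d', hd'⟩ := E.id_isInflation A.X₃
  have hd0 : d' = 0 := by simpa using (E.coker_of_conf hd').1
  rw [hd0] at hd'
  have hid : A.i ≫ A.d = 0 := (E.ker_of_conf A.conf).1
  have hZ : (𝟙 Z : Z ⟶ Z) = 0 := by
    obtain ⟨t, ht, htu⟩ := (E.coker_of_conf hd').2 (0 : A.X₃ ⟶ Z) (by simp)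
    rw [htu (𝟙 Z) (by simp), htu 0 (by simp)]
  refine ⟨⟨A.X₂, A.X₂ ⊞ A.X₃, A.X₃, biprod.inl, biprod.snd, conf_inl_snd E _ _⟩,
    ⟨A.X₃, A.X₃, Z, 𝟙 _, 0, hd'⟩,
    ⟨(A.i, biprod.lift (𝟙 _) A.d, 𝟙 _), ?_, ?_⟩,
    ⟨(A.d, biprod.desc A.d (-𝟙 _), 0), ?_, ?_⟩, ?_, ?_, ?_, ?_⟩
  · show A.i ≫ biprod.lift (𝟙 _) A.d = A.i ≫ biprod.inl
    apply biprod.hom_ext <;>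
      simp [Category.assoc, hid]
  · show A.d ≫ 𝟙 _ = biprod.lift (𝟙 _) A.d ≫ biprod.snd
    simp
  · show biprod.inl ≫ biprod.desc A.d (-𝟙 _) = A.d ≫ 𝟙 _
    simp
  · show biprod.snd ≫ (0 : A.X₃ ⟶ Z) = biprod.desc A.d (-𝟙 _) ≫ (0 : A.X₃ ⟶ Z)
    simp
  · exact ⟨A.conf, conf_lift_d E A.d, hd'⟩
  · exact ⟨⟨biprod.fst, biprod.inl_fst⟩, ⟨biprod.inr, biprod.inr_snd⟩⟩
  · exact ⟨⟨𝟙 _, by simp⟩, ⟨0, by simp [hZ]⟩⟩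
  · refine ⟨⟨⟨biprod.fst, biprod.inl_fst⟩, ⟨biprod.inr, biprod.inr_snd⟩⟩, ?_⟩
    intro Q' hQ' g
    obtain ⟨⟨r, hr⟩, ⟨s, hs⟩⟩ := hQ'
    obtain ⟨⟨g₁, g₂, g₃⟩, hg1, hg2⟩ := g
    dsimp only at hg1 hg2
    have hje : Q'.i ≫ Q'.d = 0 := (E.ker_of_conf Q'.conf).1
    set c : A.X₂ ⟶ Q'.X₂ := g₂ - g₂ ≫ r ≫ Q'.i with hc
    have h1 : A.i ≫ g₂ ≫ r ≫ Q'.i = g₁ ≫ Q'.i := by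
      rw [← Category.assoc, hg1, Category.assoc, ← Category.assoc Q'.i, hr,
        Category.id_comp]
    have hic : A.i ≫ c = 0 := by
      rw [hc, Preadditive.comp_sub, hg1, h1, sub_self]
    obtain ⟨b, hbd, _⟩ := (E.coker_of_conf A.conf).2 c hic
    have hbe : b ≫ Q'.d = g₃ := by
      obtain ⟨u, hu, huu⟩ := (E.coker_of_conf A.conf).2 (g₂ ≫ Q'.d)
        (by rw [← Category.assoc, hg1, Category.assoc, hje, comp_zero])
      have e1 : A.d ≫ b ≫ Q'.d = g₂ ≫ Q'.d := by
        rw [← Category.assoc, hbd, hc, Preadditive.sub_comp, Category.assoc,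
          Category.assoc, hje, comp_zero, comp_zero, sub_zero]
      rw [huu _ e1, huu g₃ hg2]
    refine ⟨⟨(g₂ ≫ r, biprod.desc (g₂ ≫ r ≫ Q'.i) b, g₃), ?_, ?_⟩, ?_⟩
    · show biprod.inl ≫ biprod.desc (g₂ ≫ r ≫ Q'.i) b = (g₂ ≫ r) ≫ Q'.i
      rw [biprod.inl_desc, Category.assoc]
    · show biprod.snd ≫ g₃ = biprod.desc (g₂ ≫ r ≫ Q'.i) b ≫ Q'.d
      apply biprod.hom_ext'
      · rw [← Category.assoc, biprod.inl_snd, zero_comp, ← Category.assoc,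
          biprod.inl_desc, Category.assoc, Category.assoc, hje, comp_zero,
          comp_zero]
      · rw [← Category.assoc, biprod.inr_snd, Category.id_comp, ← Category.assoc,
          biprod.inr_desc, hbe]
    · apply confHom_ext
      · show A.i ≫ g₂ ≫ r = g₁
        rw [← Category.assoc, hg1, Category.assoc, hr, Category.comp_id]
      · show biprod.lift (𝟙 _) A.d ≫ biprod.desc (g₂ ≫ r ≫ Q'.i) b = g₂
        rw [biprod.lift_desc, Category.id_comp, hbd, hc]
        abel
      · show (𝟙 _) ≫ g₃ = g₃
        simp

end Aux

/-- `S(M)` is a pseudo-cluster tilting subcategory of the category of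
conflations `E(M)` with the degree-wise exact structure. -/
theorem splitObjs_pseudoClusterTilting {M : Type u} [Category.{v} M] [Preadditive M]
    [HasBinaryBiproducts M] (E : ExactStructure M) :
    PseudoClusterTilting (degConf E) (splitObjs E) := by
  constructor
  · constructor
    · intro A
      obtain ⟨Q₀, Q₁, α, q, hconf, hQ₀, hQ₁, henv⟩ := env_part E A
      exact ⟨Q₀, α, henv, Q₁, q, hconf⟩
    · intro A
      obtain ⟨Q₀, Q₁, α, q, hconf, hQ₀, hQ₁, henv⟩ := env_part E A
      exact ⟨Q₀, Q₁, α, q, hconf, hQ₀, hQ₁, henv⟩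
  · constructor
    · intro A
      obtain ⟨P₀, P₁, ι, β, hconf, hP₀, hP₁, hcov⟩ := cov_part E A
      exact ⟨P₀, β, hcov, P₁, ι, hconf⟩
    · intro A
      obtain ⟨P₀, P₁, ι, β, hconf, hP₀, hP₁, hcov⟩ := cov_part E A
      exact ⟨P₀, P₁, ι, β, hconf, hP₀, hP₁, hcov⟩

end PaperQEC
end
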